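/- For every integer n ≥ 2, the polytope P_n has dimension n(n−1)/2; that is, the affine span of T_n in the space of n×n real matrices has dimension (as the rank of its direction subspace) equal to the binomial coefficient C(n,2). -/

import Mathlib

/-- `T n` is the set of `n × n` permutation matrices `π` (with real entries)
such that `π i j = 0` whenever `j ≥ i + 2` (`0`-based indices). -/
def T (n : ℕ) : Set (Matrix (Fin n) (Fin n) ℝ) :=
  {M | ∃ σ : Equiv.Perm (Fin n),
    (∀ i : Fin n, (σ i : ℕ) ≤ (i : ℕ) + 1) ∧
    M = Matrix.of fun i j => if σ i = j then (1 : ℝ) else 0}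

namespace DimP

variable {n : ℕ}

def cfun (n : ℕ) (a b : Fin n) : Fin n → Fin n :=
  fun i => if i = b then a
    else if a ≤ i ∧ i < b then ⟨((i : ℕ) + 1) % n, Nat.mod_lt _ i.pos⟩ else i

lemma cfun_val {a b : Fin n} (hab : a < b) (i : Fin n) :
    ((cfun n a b i : Fin n) : ℕ) =
      if (i : ℕ) = (b : ℕ) then (a : ℕ)
      else if (a : ℕ) ≤ (i : ℕ) ∧ (i : ℕ) < (b : ℕ) then (i : ℕ) + 1 else (i : ℕ) := by
  unfold cfun
  by_cases h1 : i = b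
  · subst h1; simp
  · have h1' : ¬ (i : ℕ) = (b : ℕ) := fun h => h1 (Fin.ext h)
    rw [if_neg h1, if_neg h1']
    by_cases h2 : a ≤ i ∧ i < b
    · have h2' : (a : ℕ) ≤ (i : ℕ) ∧ (i : ℕ) < (b : ℕ) :=
        ⟨Fin.le_def.mp h2.1, Fin.lt_def.mp h2.2⟩
      rw [if_pos h2, if_pos h2']
      have hb := b.isLt
      exact Nat.mod_eq_of_lt (by omega)
    · have h2' : ¬ ((a : ℕ) ≤ (i : ℕ) ∧ (i : ℕ) < (b : ℕ)) := fun h =>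
        h2 ⟨Fin.le_def.mpr h.1, Fin.lt_def.mpr h.2⟩
      rw [if_neg h2, if_neg h2']

noncomputable def cperm (a b : Fin n) (hab : a < b) : Equiv.Perm (Fin n) :=
  Equiv.ofBijective (cfun n a b) (Finite.injective_iff_bijective.mp (by
    intro i i' h
    have h' := congrArg Fin.val h
    rw [cfun_val hab, cfun_val hab] at h'
    have hab' : (a : ℕ) < (b : ℕ) := hab
    have hb := b.isLt
    exact Fin.ext (by split_ifs at h' <;> omega)))

lemma cperm_apply (a b : Fin n) (hab : a < b) (i : Fin n) :
    cperm a b hab i = cfun n a b i := rfl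

lemma cperm_le {a b : Fin n} (hab : a < b) :
    ∀ i : Fin n, ((cperm a b hab i : Fin n) : ℕ) ≤ (i : ℕ) + 1 := by
  intro i
  have hab' : (a : ℕ) < (b : ℕ) := hab
  rw [cperm_apply, cfun_val hab]
  split_ifs <;> omega

def Pm (σ : Equiv.Perm (Fin n)) : Matrix (Fin n) (Fin n) ℝ :=
  Matrix.of fun i j => if σ i = j then 1 else 0

noncomputable def D (a b : Fin n) (hab : a < b) : Matrix (Fin n) (Fin n) ℝ :=
  Pm (cperm a b hab) - 1

lemma D_apply {a b : Fin n} (hab : a < b) (i j : Fin n) :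
    D a b hab i j =
      (if ((cperm a b hab i : Fin n) : ℕ) = (j : ℕ) then (1 : ℝ) else 0)
        - (if (i : ℕ) = (j : ℕ) then 1 else 0) := by
  simp [D, Pm, Matrix.sub_apply, Matrix.one_apply, Fin.ext_iff]

lemma D_low {a b : Fin n} (hab : a < b) {i j : Fin n} (hji : (j : ℕ) < (i : ℕ)) :
    D a b hab i j = if (i : ℕ) = (b : ℕ) ∧ (j : ℕ) = (a : ℕ) then 1 else 0 := by
  have hv : ((cperm a b hab i : Fin n) : ℕ) = _ := cfun_val hab i
  have hab' : (a : ℕ) < (b : ℕ) := hab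
  rw [D_apply, hv]
  split_ifs <;> first | omega | norm_num

def V (n : ℕ) : Submodule ℝ (Matrix (Fin n) (Fin n) ℝ) where
  carrier := {N | (∀ i j : Fin n, (i : ℕ) + 2 ≤ (j : ℕ) → N i j = 0) ∧
    (∀ i : Fin n, ∑ j, N i j = 0) ∧ (∀ j : Fin n, ∑ i, N i j = 0)}
  add_mem' := by
    rintro x y ⟨hx1, hx2, hx3⟩ ⟨hy1, hy2, hy3⟩
    refine ⟨fun i j h => ?_, fun i => ?_, fun j => ?_⟩
    · simp [Matrix.add_apply, hx1 i j h, hy1 i j h]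
    · simp [Matrix.add_apply, Finset.sum_add_distrib, hx2 i, hy2 i]
    · simp [Matrix.add_apply, Finset.sum_add_distrib, hx3 j, hy3 j]
  zero_mem' := ⟨fun i j _ => rfl, fun i => by simp, fun j => by simp⟩
  smul_mem' := by
    rintro c x ⟨hx1, hx2, hx3⟩
    refine ⟨fun i j h => ?_, fun i => ?_, fun j => ?_⟩
    · simp [Matrix.smul_apply, hx1 i j h]
    · simp [Matrix.smul_apply, ← Finset.mul_sum, hx2 i]
    · simp [Matrix.smul_apply, ← Finset.mul_sum, hx3 j]

lemma Pm_mem_T {σ : Equiv.Perm (Fin n)} (hσ : ∀ i : Fin n, (σ i : ℕ) ≤ (i : ℕ) + 1) :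
    Pm σ ∈ T n := ⟨σ, hσ, rfl⟩

lemma one_mem_T : (1 : Matrix (Fin n) (Fin n) ℝ) ∈ T n := by
  refine ⟨1, fun i => by simp, ?_⟩
  ext i j
  simp [Matrix.one_apply]
  congr

lemma sub_one_mem_V {M : Matrix (Fin n) (Fin n) ℝ} (hM : M ∈ T n) : M - 1 ∈ V n := by
  obtain ⟨σ, hσ, rfl⟩ := hM
  refine ⟨?_, ?_, ?_⟩
  · intro i j hij
    have h1 : ¬ σ i = j := fun h => by
      have := hσ i
      rw [h] at this
      omega
    have h2 : ¬ i = j := fun h => by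
      subst h
      have : (i : ℕ) = (i : ℕ) := rfl
      omega
    simp [Matrix.sub_apply, Matrix.one_apply, h1, h2]
  · intro i
    simp [Matrix.sub_apply, Finset.sum_sub_distrib, Matrix.one_apply, Finset.sum_ite_eq,
      Finset.sum_ite_eq']
  · intro j
    simp [Matrix.sub_apply, Finset.sum_sub_distrib, Matrix.one_apply,
      Equiv.apply_eq_iff_eq_symm_apply, Finset.sum_ite_eq, Finset.sum_ite_eq']

abbrev Idx (n : ℕ) := {p : Fin n × Fin n // p.1 < p.2}


lemma card_Idx : Fintype.card (Idx n) = n.choose 2 := by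
  have e : Idx n ≃ Σ b : Fin n, Fin (b : ℕ) :=
    { toFun := fun p => ⟨p.1.2, ⟨(p.1.1 : ℕ), Fin.lt_def.mp p.2⟩⟩
      invFun := fun q => ⟨(⟨(q.2 : ℕ), lt_trans q.2.isLt q.1.isLt⟩, q.1),
        Fin.lt_def.mpr q.2.isLt⟩
      left_inv := fun p => rfl
      right_inv := fun q => rfl }
  rw [Fintype.card_congr e, Fintype.card_sigma]
  simp only [Fintype.card_fin]
  rw [Fin.sum_univ_eq_sum_range (fun i => i) n, Finset.sum_range_id, Nat.choose_two_right]

noncomputable def ff (n : ℕ) : Idx n → Matrix (Fin n) (Fin n) ℝ :=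
  fun p => D p.1.1 p.1.2 p.2

lemma ff_mem_image (p : Idx n) : ff n p ∈ (fun M => M - 1) '' T n :=
  ⟨Pm (cperm p.1.1 p.1.2 p.2), Pm_mem_T (cperm_le p.2), rfl⟩

lemma ff_mem_V (p : Idx n) : ff n p ∈ V n :=
  sub_one_mem_V (Pm_mem_T (cperm_le p.2))

lemma ff_linearIndependent : LinearIndependent ℝ (ff n) := by
  rw [Fintype.linearIndependent_iff]
  intro g hg p
  obtain ⟨⟨a, b⟩, hab⟩ := p
  have hab' : (a : ℕ) < (b : ℕ) := hab
  have h := congrFun (congrFun hg b) a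
  rw [Matrix.sum_apply] at h
  rw [Finset.sum_eq_single_of_mem (⟨(a, b), hab⟩ : Idx n) (Finset.mem_univ _)] at h
  · rw [Matrix.smul_apply, ff, D_low hab hab', if_pos ⟨rfl, rfl⟩] at h
    simpa using h
  · intro q _ hq
    rw [Matrix.smul_apply, ff, D_low q.2 hab', if_neg, smul_zero]
    rintro ⟨h1, h2⟩
    exact hq (Subtype.ext (Prod.ext (Fin.ext h2.symm) (Fin.ext h1.symm)))

lemma V_le_span : V n ≤ Submodule.span ℝ (Set.range (ff n)) := by
  intro N hN
  obtain ⟨hN1, hN2, hN3⟩ := hN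
  classical
  set Rm : Matrix (Fin n) (Fin n) ℝ :=
    N - ∑ p : Idx n, N p.1.2 p.1.1 • ff n p with hRdef
  have hRV : Rm ∈ V n := by
    exact (V n).sub_mem ⟨hN1, hN2, hN3⟩
      (Submodule.sum_mem _ fun p _ => (V n).smul_mem _ (ff_mem_V p))
  obtain ⟨hR1, hR2, hR3⟩ := hRV
  have hlow : ∀ i j : Fin n, (j : ℕ) < (i : ℕ) → Rm i j = 0 := by
    intro i j hji
    have hsum : (∑ p : Idx n, N p.1.2 p.1.1 • ff n p) i j = N i j := by
      rw [Matrix.sum_apply]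
      rw [Finset.sum_eq_single_of_mem (⟨(j, i), Fin.lt_def.mpr hji⟩ : Idx n)
        (Finset.mem_univ _)]
      · rw [Matrix.smul_apply, ff, D_low _ hji, if_pos ⟨rfl, rfl⟩]
        simp
      · intro q _ hq
        rw [Matrix.smul_apply, ff, D_low q.2 hji, if_neg, smul_zero]
        rintro ⟨h1, h2⟩
        exact hq (Subtype.ext (Prod.ext (Fin.ext h2.symm) (Fin.ext h1.symm)))
    rw [hRdef, Matrix.sub_apply, hsum, sub_self]
  have key : ∀ m : ℕ, ∀ j : Fin n, (j : ℕ) = m → ∀ i : Fin n, Rm i j = 0 := by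
    intro m
    induction m using Nat.strong_induction_on with
    | _ m IH =>
      intro j hj
      have hsup : ∀ i' : Fin n, (i' : ℕ) + 1 = (j : ℕ) → Rm i' j = 0 := by
        intro i' hi'
        have hrow := hR2 i'
        have hone : ∑ k, Rm i' k = Rm i' j := by
          apply Finset.sum_eq_single_of_mem j (Finset.mem_univ j)
          intro k _ hk
          rcases lt_trichotomy (k : ℕ) (i' : ℕ) with h | h | h
          · exact hlow i' k h
          · have hki : k = i' := Fin.ext h
            subst hki
            exact IH (k : ℕ) (by omega) k rfl k
          · have hkj : (k : ℕ) ≠ (j : ℕ) := fun hh => hk (Fin.ext hh)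
            exact hR1 i' k (by omega)
        rw [hone] at hrow
        exact hrow
      intro i
      rcases lt_trichotomy (i : ℕ) (j : ℕ) with h | h | h
      · by_cases h' : (i : ℕ) + 1 = (j : ℕ)
        · exact hsup i h'
        · exact hR1 i j (by omega)
      · have hij : i = j := Fin.ext h
        have hcol := hR3 j
        have hone : ∑ k, Rm k j = Rm j j := by
          apply Finset.sum_eq_single_of_mem j (Finset.mem_univ j)
          intro k _ hk
          rcases lt_trichotomy (k : ℕ) (j : ℕ) with h2 | h2 | h2
          · by_cases h3 : (k : ℕ) + 1 = (j : ℕ)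
            · exact hsup k h3
            · exact hR1 k j (by omega)
          · exact absurd (Fin.ext h2) hk
          · exact hlow k j h2
        rw [hone] at hcol
        rw [hij]
        exact hcol
      · exact hlow i j h
  have hR0 : Rm = 0 := by
    ext i j
    exact key (j : ℕ) j rfl i
  have hNe : N = ∑ p : Idx n, N p.1.2 p.1.1 • ff n p := by
    have : N - ∑ p : Idx n, N p.1.2 p.1.1 • ff n p = 0 := by rw [← hRdef]; exact hR0
    exact sub_eq_zero.mp this
  rw [hNe]
  exact Submodule.sum_mem _ fun p _ =>
    Submodule.smul_mem _ _ (Submodule.subset_span ⟨p, rfl⟩)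

end DimP

open DimP in
/-- For every `n ≥ 2`, the polytope `P n = conv(T n)` has dimension
`n(n-1)/2`: the direction of the affine span of `T n` has rank `C(n,2)`. -/
theorem dim_P (n : ℕ) (hn : 2 ≤ n) :
    Module.finrank ℝ (affineSpan ℝ (T n)).direction = n.choose 2 := by
  classical
  rw [direction_affineSpan]
  rw [vectorSpan_eq_span_vsub_set_right ℝ (one_mem_T (n := n))]
  simp only [vsub_eq_sub]
  have hspan : Submodule.span ℝ ((fun M => M - (1 : Matrix (Fin n) (Fin n) ℝ)) '' T n)
      = Submodule.span ℝ (Set.range (ff n)) := by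
    apply le_antisymm
    · refine le_trans (Submodule.span_le.mpr ?_) V_le_span
      rintro _ ⟨M, hM, rfl⟩
      exact sub_one_mem_V hM
    · apply Submodule.span_le.mpr
      rintro _ ⟨p, rfl⟩
      exact Submodule.subset_span (ff_mem_image p)
  change Module.finrank ℝ (Submodule.span ℝ
      ((fun M => M - (1 : Matrix (Fin n) (Fin n) ℝ)) '' T n)) = n.choose 2
  rw [hspan, finrank_span_eq_card ff_linearIndependent, card_Idx]
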